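/- Let A be an automorphism of the binary rooted tree acting transitively on levels and B any tree endomorphism. Define Exp_A(B)_n(w) = A^{ψ(B(w))}(w) for words w of length n, where ψ(v) = Σ_i v_i 2^i. Then each Exp_A(B)_n is an endomorphism of the finite binary tree of depth n, and these maps are compatible: for any word w of length n and letters x, y, Exp_A(B)_{n+1}(wx) and Exp_A(B)_{n+1}(wy) have the same length-n prefix, equal to Exp_A(B)_n(w). -/
import Mathlib


/-- A (level-preserving, adjacency-preserving) endomorphism of the rooted tree `X*`. -/
def IsEndo {X : Type*} (f : List X → List X) : Prop :=
  (∀ w, (f w).length = w.length) ∧ ∀ w a, ∃ b, f (w ++ [a]) = f w ++ [b]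

/-- `ψ(w) = ∑ w_i 2^i`: the integer encoded by a binary word
(least significant bit first). -/
def wordToNat {d : ℕ} (w : List (Fin d)) : ℕ :=
  w.foldr (fun a acc => a.val + d * acc) 0

lemma iterate_len {A : List (Fin 2) → List (Fin 2)} (hA : IsEndo A) (k : ℕ)
    (w : List (Fin 2)) : (A^[k] w).length = w.length := by
  induction k with
  | zero => rfl
  | succ k ih => rw [Function.iterate_succ_apply', hA.1, ih]

lemma iterate_endo {A : List (Fin 2) → List (Fin 2)} (hA : IsEndo A) (k : ℕ)
    (w : List (Fin 2)) (a : Fin 2) : ∃ b, A^[k] (w ++ [a]) = A^[k] w ++ [b] := by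
  induction k with
  | zero => exact ⟨a, rfl⟩
  | succ k ih =>
    obtain ⟨b, hb⟩ := ih
    obtain ⟨c, hc⟩ := hA.2 (A^[k] w) b
    exact ⟨c, by rw [Function.iterate_succ_apply', hb, hc, Function.iterate_succ_apply']⟩

lemma foldr_aux {d : ℕ} (u : List (Fin d)) (c : ℕ) :
    u.foldr (fun a acc => a.val + d * acc) c = wordToNat u + d ^ u.length * c := by
  induction u with
  | nil => simp [wordToNat]
  | cons a u ih =>
    simp only [List.foldr_cons, ih, wordToNat, List.length_cons, pow_succ]
    ring

lemma wordToNat_append {d : ℕ} (u : List (Fin d)) (b : Fin d) :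
    wordToNat (u ++ [b]) = wordToNat u + b.val * d ^ u.length := by
  have h : wordToNat (u ++ [b]) = u.foldr (fun a acc => a.val + d * acc) b.val := by
    simp [wordToNat, List.foldr_append]
  rw [h, foldr_aux, mul_comm]

/-- Key lemma: `A^[2^n]` fixes every word of length `n`. -/
lemma period {A : List (Fin 2) → List (Fin 2)} (hA : IsEndo A)
    (hAbij : Function.Bijective A)
    (htrans : ∀ u v : List (Fin 2), u.length = v.length → ∃ k, A^[k] u = v)
    (n : ℕ) (w : List (Fin 2)) (hw : w.length = n) : A^[2 ^ n] w = w := by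
  have hinj : ∀ k : ℕ, Function.Injective (A^[k]) := fun k => hAbij.1.iterate k
  haveI : Finite {l : List (Fin 2) // l.length = n} :=
    inferInstanceAs (Finite (List.Vector (Fin 2) n))
  -- existence of a positive period
  have hex : ∃ m, 0 < m ∧ A^[m] w = w := by
    have : ∃ i j : ℕ, i ≠ j ∧
        (⟨A^[i] w, by rw [iterate_len hA]; exact hw⟩ : List.Vector (Fin 2) n)
          = ⟨A^[j] w, by rw [iterate_len hA]; exact hw⟩ := by
      exact Finite.exists_ne_map_eq_of_infinite _
    obtain ⟨i, j, hij, heq⟩ := this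
    have heq' : A^[i] w = A^[j] w := congrArg Subtype.val heq
    rcases hij.lt_or_gt with h | h
    · refine ⟨j - i, Nat.sub_pos_of_lt h, ?_⟩
      apply hinj i
      rw [← Function.iterate_add_apply, Nat.add_sub_cancel' h.le, ← heq']
    · refine ⟨i - j, Nat.sub_pos_of_lt h, ?_⟩
      apply hinj j
      rw [← Function.iterate_add_apply, Nat.add_sub_cancel' h.le, heq']
  classical
  set m := Nat.find hex with hm
  obtain ⟨hmpos, hmfix⟩ := Nat.find_spec hex
  -- multiples of m fix w
  have hmul : ∀ q, A^[m * q] w = w := by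
    intro q
    rw [Function.iterate_mul]
    exact Function.iterate_fixed hmfix q
  -- the map Fin m → Vector
  let g : Fin m → List.Vector (Fin 2) n :=
    fun i => ⟨A^[i.val] w, by rw [iterate_len hA]; exact hw⟩
  have hginj : Function.Injective g := by
    intro i j heq
    have heq' : A^[i.val] w = A^[j.val] w := congrArg Subtype.val heq
    by_contra hne
    have hne' : i.val ≠ j.val := fun h => hne (Fin.ext h)
    rcases hne'.lt_or_gt with h | h
    · have : A^[j.val - i.val] w = w := by
        apply hinj i.val
        rw [← Function.iterate_add_apply, Nat.add_sub_cancel' h.le, ← heq']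
      exact Nat.find_min hex (lt_of_le_of_lt (Nat.sub_le _ _) j.isLt)
        ⟨Nat.sub_pos_of_lt h, this⟩
    · have : A^[i.val - j.val] w = w := by
        apply hinj j.val
        rw [← Function.iterate_add_apply, Nat.add_sub_cancel' h.le, heq']
      exact Nat.find_min hex (lt_of_le_of_lt (Nat.sub_le _ _) i.isLt)
        ⟨Nat.sub_pos_of_lt h, this⟩
  have hgsurj : Function.Surjective g := by
    intro v
    obtain ⟨k, hk⟩ := htrans w v.val (by rw [hw, v.property])
    refine ⟨⟨k % m, Nat.mod_lt _ hmpos⟩, ?_⟩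
    apply Subtype.ext
    show A^[k % m] w = v.val
    calc A^[k % m] w = A^[k % m] (A^[m * (k / m)] w) := by rw [hmul]
    _ = A^[k % m + m * (k / m)] w := (Function.iterate_add_apply _ _ _ _).symm
    _ = A^[k] w := by rw [Nat.mod_add_div]
    _ = v.val := hk
  have hcard : m = 2 ^ n := by
    have h1 : Fintype.card (Fin m) ≤ Fintype.card (List.Vector (Fin 2) n) :=
      Fintype.card_le_of_injective g hginj
    have h2 : Fintype.card (List.Vector (Fin 2) n) ≤ Fintype.card (Fin m) :=
      Fintype.card_le_of_surjective g hgsurj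
    have := le_antisymm h1 h2
    rwa [Fintype.card_fin, card_vector, Fintype.card_fin] at this
  rw [← hcard]
  exact hmfix

/-- For `A` a level-transitive automorphism of the binary tree and `B` any tree
endomorphism, `Exp_A(B) : w ↦ A^{ψ(B(w))}(w)` is an endomorphism of the tree: it is
level-preserving and prefix-compatible, so that for any word `w` of length `n` and
letters `x`, `y`, the words `Exp_A(B)(wx)` and `Exp_A(B)(wy)` share the length-`n`
prefix `Exp_A(B)(w)`. -/
theorem stmt16 (A B : List (Fin 2) → List (Fin 2))
    (hA : IsEndo A) (hAbij : Function.Bijective A)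
    (htrans : ∀ u v : List (Fin 2), u.length = v.length → ∃ k, A^[k] u = v)
    (hB : IsEndo B) :
    IsEndo (fun w => A^[wordToNat (B w)] w) ∧
      ∀ (w : List (Fin 2)) (x : Fin 2),
        (A^[wordToNat (B (w ++ [x]))] (w ++ [x])).take w.length
          = A^[wordToNat (B w)] w := by
  have key : ∀ w (a : Fin 2), ∃ b,
      A^[wordToNat (B (w ++ [a]))] (w ++ [a]) = A^[wordToNat (B w)] w ++ [b] := by
    intro w a
    obtain ⟨c, hc⟩ := hB.2 w a
    have hψ : wordToNat (B (w ++ [a]))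
        = wordToNat (B w) + c.val * 2 ^ w.length := by
      rw [hc, wordToNat_append, hB.1 w]
    have hfix : A^[c.val * 2 ^ w.length] w = w := by
      rw [mul_comm, Function.iterate_mul]
      exact Function.iterate_fixed (period hA hAbij htrans w.length w rfl) c.val
    obtain ⟨b0, hb0⟩ := iterate_endo hA (c.val * 2 ^ w.length) w a
    rw [hfix] at hb0
    obtain ⟨b, hb⟩ := iterate_endo hA (wordToNat (B w)) w b0
    refine ⟨b, ?_⟩
    rw [hψ, Function.iterate_add_apply, hb0, hb]
  refine ⟨⟨fun w => iterate_len hA _ _, key⟩, ?_⟩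
  intro w x
  obtain ⟨b, hb⟩ := key w x
  rw [hb, List.take_left' (iterate_len hA _ _)]
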